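/- If there exists an almost disjoint family of true cardinality 𝔠, then there exists an almost disjoint family ℱ of true cardinality 𝔠 such that Ψ(ℱ) is quasi-normal but not almost-normal. -/

import Mathlib

open Set

namespace PsiSpace

/-- An (infinite) almost disjoint family of infinite subsets of ℕ. -/
def AlmostDisjoint (𝒜 : Set (Set ℕ)) : Prop :=
  𝒜.Infinite ∧ (∀ a ∈ 𝒜, a.Infinite) ∧
    ∀ a ∈ 𝒜, ∀ b ∈ 𝒜, a ≠ b → (a ∩ b).Finite

/-- A maximal almost disjoint family. -/
def MadFamily (𝒜 : Set (Set ℕ)) : Prop :=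
  AlmostDisjoint 𝒜 ∧ ∀ X : Set ℕ, X.Infinite → ∃ a ∈ 𝒜, (a ∩ X).Infinite

/-- 𝒜↾B = {a ∈ 𝒜 : a ∩ B infinite}. -/
def ADRestrict (𝒜 : Set (Set ℕ)) (B : Set ℕ) : Set (Set ℕ) :=
  {a | a ∈ 𝒜 ∧ (a ∩ B).Infinite}

/-- 𝒜 has true cardinality 𝔠. -/
def TrueCardContinuum (𝒜 : Set (Set ℕ)) : Prop :=
  ∀ B : Set ℕ, (ADRestrict 𝒜 B).Finite ∨ Cardinal.mk ↥(ADRestrict 𝒜 B) = Cardinal.continuum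

/-- The underlying set of the Mrówka–Isbell space Ψ(𝒜): ℕ together with the members of 𝒜. -/
def Psi (𝒜 : Set (Set ℕ)) : Type := ℕ ⊕ {a : Set ℕ // a ∈ 𝒜}

/-- The isolated point of Ψ(𝒜) corresponding to n ∈ ℕ. -/
def Psi.nat {𝒜 : Set (Set ℕ)} (n : ℕ) : Psi 𝒜 := Sum.inl n

/-- The point of Ψ(𝒜) corresponding to a ∈ 𝒜. -/
def Psi.pt {𝒜 : Set (Set ℕ)} (a : {a : Set ℕ // a ∈ 𝒜}) : Psi 𝒜 := Sum.inr a

/-- The Mrówka–Isbell topology: each n ∈ ℕ is isolated, and basic neighbourhoods of a ∈ 𝒜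
are {a} ∪ (a \ F) for F finite. Equivalently, U is open iff for every a ∈ 𝒜 with a ∈ U,
all but finitely many elements of a belong to U. -/
instance psiTop (𝒜 : Set (Set ℕ)) : TopologicalSpace (Psi 𝒜) where
  IsOpen U := ∀ a : {a : Set ℕ // a ∈ 𝒜}, Psi.pt a ∈ U →
    {n : ℕ | n ∈ a.1 ∧ Psi.nat n ∉ U}.Finite
  isOpen_univ := fun a _ => by
    convert Set.finite_empty using 1
    ext n
    simp [Set.mem_univ]
  isOpen_inter := fun U V hU hV a ha => by
    refine ((hU a ha.1).union (hV a ha.2)).subset ?_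
    rintro n ⟨hn, hnUV⟩
    by_cases h : Psi.nat n ∈ U
    · exact Or.inr ⟨hn, fun h' => hnUV ⟨h, h'⟩⟩
    · exact Or.inl ⟨hn, h⟩
  isOpen_sUnion := fun S hS a ha => by
    obtain ⟨U, hUS, haU⟩ := ha
    exact (hS U hUS a haU).subset fun n hn => ⟨hn.1, fun h => hn.2 ⟨U, hUS, h⟩⟩

/-- The copy of a set W ⊆ ℕ inside Ψ(𝒜). -/
def PsiNat (𝒜 : Set (Set ℕ)) (W : Set ℕ) : Set (Psi 𝒜) := {x | ∃ n ∈ W, x = Psi.nat n}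

/-- The copy of a subfamily 𝒞 ⊆ 𝒜 inside Ψ(𝒜). -/
def PsiSub (𝒜 𝒞 : Set (Set ℕ)) : Set (Psi 𝒜) :=
  {x | ∃ a : {a : Set ℕ // a ∈ 𝒜}, a.1 ∈ 𝒞 ∧ x = Psi.pt a}

/-- A and B are separated by disjoint open sets. -/
def SepOpen {X : Type*} [TopologicalSpace X] (A B : Set X) : Prop :=
  ∃ U V : Set X, IsOpen U ∧ IsOpen V ∧ A ⊆ U ∧ B ⊆ V ∧ Disjoint U V

/-- Regular closed (closed domain): A is the closure of its interior. -/
def RegClosed {X : Type*} [TopologicalSpace X] (A : Set X) : Prop :=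
  closure (interior A) = A

/-- π-closed: a finite intersection of regular closed sets. -/
def PiClosed {X : Type*} [TopologicalSpace X] (A : Set X) : Prop :=
  ∃ S : Finset (Set X), (∀ B ∈ S, RegClosed B) ∧ A = ⋂₀ ↑S

/-- A is an intersection of at most n regular closed sets. -/
def InterOfAtMost {X : Type*} [TopologicalSpace X] (n : ℕ) (A : Set X) : Prop :=
  ∃ S : Finset (Set X), S.card ≤ n ∧ (∀ B ∈ S, RegClosed B) ∧ A = ⋂₀ ↑S

/-- Almost-normal: disjoint closed + regular closed sets are separated. -/
def AlmostNormal (X : Type*) [TopologicalSpace X] : Prop :=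
  ∀ A B : Set X, IsClosed A → RegClosed B → Disjoint A B → SepOpen A B

/-- π-normal: disjoint closed + π-closed sets are separated. -/
def PiNormal (X : Type*) [TopologicalSpace X] : Prop :=
  ∀ A B : Set X, IsClosed A → PiClosed B → Disjoint A B → SepOpen A B

/-- Quasi-normal: disjoint π-closed sets are separated. -/
def QuasiNormal (X : Type*) [TopologicalSpace X] : Prop :=
  ∀ A B : Set X, PiClosed A → PiClosed B → Disjoint A B → SepOpen A B

/-- Mildly-normal: disjoint regular closed sets are separated. -/
def MildlyNormal (X : Type*) [TopologicalSpace X] : Prop :=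
  ∀ A B : Set X, RegClosed A → RegClosed B → Disjoint A B → SepOpen A B

/-- Partly-normal: disjoint regular closed + π-closed sets are separated. -/
def PartlyNormal (X : Type*) [TopologicalSpace X] : Prop :=
  ∀ A B : Set X, RegClosed A → PiClosed B → Disjoint A B → SepOpen A B

/-- n-partly-normal: disjoint regular closed + (intersection of at most n regular closed)
sets are separated. -/
def NPartlyNormal (n : ℕ) (X : Type*) [TopologicalSpace X] : Prop :=
  ∀ A B : Set X, RegClosed A → InterOfAtMost n B → Disjoint A B → SepOpen A B

/-- 𝓘⁺(𝒜): the sets B ⊆ ℕ with 𝒜↾B infinite. -/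
def IPlus (𝒜 : Set (Set ℕ)) : Set (Set ℕ) := {B | (ADRestrict 𝒜 B).Infinite}

/-- Completely separable almost disjoint family. -/
def CompletelySeparable (𝒜 : Set (Set ℕ)) : Prop :=
  ∀ B ∈ IPlus 𝒜, ∃ a ∈ 𝒜, a ⊆ B

/-- A Luzin family: it can be enumerated as ⟨a_α : α < ω₁⟩ so that for each α < ω₁ and
n ∈ ℕ, the set {β < α : a_α ∩ a_β ⊆ n} is finite. -/
def LuzinFamily (𝒜 : Set (Set ℕ)) : Prop :=
  ∃ a : Ordinal.{0} → Set ℕ,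
    (∀ α, α < (Cardinal.aleph 1).ord → a α ∈ 𝒜) ∧
    (∀ x ∈ 𝒜, ∃ α, α < (Cardinal.aleph 1).ord ∧ a α = x) ∧
    (∀ α, α < (Cardinal.aleph 1).ord → ∀ β, β < (Cardinal.aleph 1).ord → α ≠ β → a α ≠ a β) ∧
    ∀ α, α < (Cardinal.aleph 1).ord → ∀ n : ℕ,
      {β : Ordinal.{0} | β < α ∧ a α ∩ a β ⊆ Set.Iio n}.Finite

/-- Strongly ℵ₀-separated almost disjoint family. -/
def StronglyAleph0Separated (𝒜 : Set (Set ℕ)) : Prop :=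
  ∀ A B : Set (Set ℕ), A ⊆ 𝒜 → B ⊆ 𝒜 → A.Countable → A.Infinite →
    B.Countable → B.Infinite → Disjoint A B →
    ∃ X : Set ℕ,
      (∀ a ∈ 𝒜, (a \ X).Finite ∨ (a ∩ X).Finite) ∧
      (∀ a ∈ A, (a \ X).Finite) ∧
      (∀ a ∈ B, (a ∩ X).Finite)

open Cardinal

namespace Construction

noncomputable section

abbrev β : Type := (Cardinal.continuum.ord).ToType

def Φ : β ≃ (List (Set ℕ) × β × ℕ) := by
  apply Classical.choice
  rw [← Cardinal.eq]
  have h2 : #(List (Set ℕ)) = continuum := by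
    rw [mk_list_eq_mk, mk_set, mk_nat, two_power_aleph0]
  have : #(List (Set ℕ) × β × ℕ) = continuum := by
    rw [Cardinal.mk_prod, Cardinal.mk_prod, h2, mk_ord_toType, mk_nat]
    simp only [Cardinal.lift_id]
    rw [Cardinal.mul_aleph0_eq aleph0_le_continuum, Cardinal.mul_eq_self aleph0_le_continuum]
  rw [this, mk_ord_toType]

attribute [local instance] Classical.propDecidable

variable (𝒜 : Set (Set ℕ))

/-- countably many distinguished members of 𝒜 -/
def cd (h : AlmostDisjoint 𝒜) : ℕ → Set ℕ := fun n => (Set.Infinite.natEmbedding 𝒜 h.1 n : Set ℕ)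

lemma cd_mem (h : AlmostDisjoint 𝒜) (n : ℕ) : cd 𝒜 h n ∈ 𝒜 := (Set.Infinite.natEmbedding 𝒜 h.1 n).2

lemma cd_inj (h : AlmostDisjoint 𝒜) : Function.Injective (cd 𝒜 h) := by
  intro m n hmn
  exact (Set.Infinite.natEmbedding 𝒜 h.1).injective (Subtype.ext hmn)

/-- the B-set assigned to a β-index -/
def TsetW (b : β) : Set ℕ := (Φ b).1.getD (Φ b).2.2 ∅

/-- candidate pool -/
def Tset (h : AlmostDisjoint 𝒜) (b : β) : Set (Set ℕ) :=
  (if (ADRestrict 𝒜 (TsetW b)).Infinite then ADRestrict 𝒜 (TsetW b) else 𝒜) \ range (cd 𝒜 h)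

lemma ADRestrict_subset (B : Set ℕ) : ADRestrict 𝒜 B ⊆ 𝒜 := fun _ ha => ha.1

lemma Tset_subset (h : AlmostDisjoint 𝒜) (b : β) : Tset 𝒜 h b ⊆ 𝒜 \ range (cd 𝒜 h) := by
  intro x hx
  refine ⟨?_, hx.2⟩
  rcases hx with ⟨hx1, _⟩
  split at hx1
  · exact hx1.1
  · exact hx1

lemma mk_ADRestrict_of_infinite (h : AlmostDisjoint 𝒜) (htc : TrueCardContinuum 𝒜)
    {B : Set ℕ} (hB : (ADRestrict 𝒜 B).Infinite) : #↥(ADRestrict 𝒜 B) = continuum := by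
  rcases htc B with h1 | h1
  · exact absurd h1 hB
  · exact h1

lemma ADRestrict_univ (h : AlmostDisjoint 𝒜) : ADRestrict 𝒜 univ = 𝒜 := by
  ext a
  constructor
  · exact fun ha => ha.1
  · intro ha
    refine ⟨ha, ?_⟩
    simpa [inter_univ] using h.2.1 a ha

lemma mk_family (h : AlmostDisjoint 𝒜) (htc : TrueCardContinuum 𝒜) : #↥𝒜 = continuum := by
  have := mk_ADRestrict_of_infinite 𝒜 h htc (B := univ) (by rw [ADRestrict_univ 𝒜 h]; exact h.1)
  rwa [ADRestrict_univ 𝒜 h] at this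

/-- removing a set of size < 𝔠 and something countable from a set of size 𝔠 leaves it nonempty -/
lemma exists_of_small_diff {S U : Set (Set ℕ)} (hS : #↥S = continuum)
    (hU : #↥U < continuum) (C : Set (Set ℕ)) (hC : C.Countable) :
    ∃ x, x ∈ S ∧ x ∉ U ∧ x ∉ C := by
  by_contra hcon
  push_neg at hcon
  have hsub : S ⊆ U ∪ C := by
    intro x hx
    by_cases hxU : x ∈ U
    · exact Or.inl hxU
    · exact Or.inr (hcon x hx hxU)
  have h1 : #↥S ≤ #↥U + #↥C := le_trans (mk_le_mk_of_subset hsub) (mk_union_le _ _)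
  have h2 : #↥C ≤ ℵ₀ := mk_le_aleph0_iff.mpr hC.to_subtype
  have h3 : #↥U + #↥C < continuum :=
    Cardinal.add_lt_of_lt aleph0_le_continuum hU (lt_of_le_of_lt h2 aleph0_lt_continuum)
  rw [hS] at h1
  exact absurd (lt_of_le_of_lt h1 h3) (lt_irrefl _)

lemma mk_Tset (h : AlmostDisjoint 𝒜) (htc : TrueCardContinuum 𝒜) (b : β) :
    ∃ x, x ∈ Tset 𝒜 h b := by
  have hcd : (range (cd 𝒜 h)).Countable := countable_range _
  have : #↥(if (ADRestrict 𝒜 (TsetW b)).Infinite then ADRestrict 𝒜 (TsetW b) else 𝒜) = continuum := by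
    split
    · exact mk_ADRestrict_of_infinite 𝒜 h htc (by assumption)
    · exact mk_family 𝒜 h htc
  obtain ⟨x, hx1, _, hx3⟩ := exists_of_small_diff this
    (lt_of_le_of_lt (mk_le_aleph0_iff.mpr (countable_empty (α := Set ℕ)).to_subtype) aleph0_lt_continuum)
    (range (cd 𝒜 h)) hcd
  exact ⟨x, hx1, hx3⟩

variable (had : AlmostDisjoint 𝒜) (htc : TrueCardContinuum 𝒜)
include had htc

lemma fresh_exists (b : β) (rec : ∀ c : β, c < b → Set ℕ) :
    ∃ x, x ∈ Tset 𝒜 had b ∧ ∀ (c : β) (hc : c < b), x ≠ rec c hc := by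
  classical
  set U : Set (Set ℕ) := range (fun p : {c : β // c < b} => rec p.1 p.2) with hU
  have hUcard : #↥U < continuum := by
    refine lt_of_le_of_lt (mk_range_le) ?_
    exact Cardinal.mk_Iio_ord_toType b
  have hTcard : #↥(if (ADRestrict 𝒜 (TsetW b)).Infinite then ADRestrict 𝒜 (TsetW b) else 𝒜)
      = continuum := by
    split
    · exact mk_ADRestrict_of_infinite 𝒜 had htc (by assumption)
    · exact mk_family 𝒜 had htc
  obtain ⟨x, hx1, hx2, hx3⟩ := exists_of_small_diff hTcard hUcard (range (cd 𝒜 had))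
    (countable_range _)
  refine ⟨x, ⟨hx1, hx3⟩, ?_⟩
  intro c hc hxc
  exact hx2 ⟨⟨c, hc⟩, hxc.symm⟩

def F : β → Set ℕ :=
  WellFounded.fix (IsWellFounded.wf (r := ((· < ·) : β → β → Prop)))
    (fun b rec => (fresh_exists 𝒜 had htc b rec).choose)

lemma F_spec (b : β) : F 𝒜 had htc b ∈ Tset 𝒜 had b ∧
    ∀ (c : β), c < b → F 𝒜 had htc b ≠ F 𝒜 had htc c := by
  have h := WellFounded.fix_eq (IsWellFounded.wf (r := ((· < ·) : β → β → Prop)))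
    (fun b rec => (fresh_exists 𝒜 had htc b rec).choose) b
  have h2 := (fresh_exists 𝒜 had htc b
    (fun c _ => WellFounded.fix (IsWellFounded.wf (r := ((· < ·) : β → β → Prop)))
      (fun b rec => (fresh_exists 𝒜 had htc b rec).choose) c)).choose_spec
  constructor
  · rw [F, h]; exact h2.1
  · intro c hc
    rw [F, h]
    exact h2.2 c hc

lemma F_inj : Function.Injective (F 𝒜 had htc) := by
  intro b c hbc
  rcases lt_trichotomy b c with h | h | h
  · exact absurd hbc.symm ((F_spec 𝒜 had htc c).2 b h)
  · exact h
  · exact absurd hbc ((F_spec 𝒜 had htc b).2 c h)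

/-- source member for stage s, coordinate k -/
def src (s : List (Set ℕ) × β) (k : ℕ) : Set ℕ := F 𝒜 had htc (Φ.symm (s.1, s.2, k))

lemma src_spec (s : List (Set ℕ) × β) (k : ℕ) :
    src 𝒜 had htc s k ∈ Tset 𝒜 had (Φ.symm (s.1, s.2, k)) := (F_spec 𝒜 had htc _).1

omit had htc in
lemma TsetW_symm (𝒜' : Set (Set ℕ)) (s : List (Set ℕ) × β) (k : ℕ) :
    TsetW (Φ.symm (s.1, s.2, k)) = s.1.getD k ∅ := by
  rw [TsetW, Equiv.apply_symm_apply]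

lemma src_mem (s : List (Set ℕ) × β) (k : ℕ) : src 𝒜 had htc s k ∈ 𝒜 :=
  ((Tset_subset 𝒜 had _) (src_spec 𝒜 had htc s k)).1

lemma src_not_cd (s : List (Set ℕ) × β) (k : ℕ) :
    src 𝒜 had htc s k ∉ range (cd 𝒜 had) :=
  ((Tset_subset 𝒜 had _) (src_spec 𝒜 had htc s k)).2

lemma src_trace (s : List (Set ℕ) × β) (k : ℕ)
    (h : (ADRestrict 𝒜 (s.1.getD k ∅)).Infinite) :
    src 𝒜 had htc s k ∈ ADRestrict 𝒜 (s.1.getD k ∅) := by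
  have h2 := src_spec 𝒜 had htc s k
  rw [Tset, TsetW_symm 𝒜] at h2
  rw [if_pos h] at h2
  exact h2.1

lemma src_inj {s t : List (Set ℕ) × β} {k k' : ℕ} (h : s ≠ t ∨ k ≠ k') :
    src 𝒜 had htc s k ≠ src 𝒜 had htc t k' := by
  intro hc
  have := F_inj 𝒜 had htc hc
  have h2 : (s.1, s.2, k) = (t.1, t.2, k') := Φ.symm.injective this
  rcases h with h | h
  · apply h
    have h3 : s.1 = t.1 := congrArg (fun p : List (Set ℕ) × β × ℕ => p.1) h2
    have h4 : s.2 = t.2 := congrArg (fun p : List (Set ℕ) × β × ℕ => p.2.1) h2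
    exact Prod.ext h3 h4
  · exact h (congrArg (fun p : List (Set ℕ) × β × ℕ => p.2.2) h2)

/-- the amalgam member for a stage -/
def Eam (s : List (Set ℕ) × β) : Set ℕ :=
  ⋃ k ∈ Finset.range s.1.length, src 𝒜 had htc s k ∩ s.1.getD k ∅

def Active (L : List (Set ℕ)) : Prop :=
  L ≠ [] ∧ ∀ W ∈ L, (ADRestrict 𝒜 W).Infinite

def Fam : Set (Set ℕ) :=
  range (cd 𝒜 had) ∪ {x | ∃ s : List (Set ℕ) × β, Active 𝒜 s.1 ∧ x = Eam 𝒜 had htc s}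

lemma Eam_inter_finite_of_src_ne {m : Set ℕ} (hm : m ∈ 𝒜) (s : List (Set ℕ) × β)
    (h : ∀ k, src 𝒜 had htc s k ≠ m) : (Eam 𝒜 had htc s ∩ m).Finite := by
  rw [Eam, Set.iUnion₂_inter]
  refine Set.Finite.biUnion (Finset.finite_toSet _) ?_
  intro k _
  have : src 𝒜 had htc s k ∩ s.1.getD k ∅ ∩ m ⊆ src 𝒜 had htc s k ∩ m := by
    intro x hx; exact ⟨hx.1.1, hx.2⟩
  exact Set.Finite.subset (had.2.2 _ (src_mem 𝒜 had htc s k) m hm (h k)) this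

lemma Eam_Eam_finite {s t : List (Set ℕ) × β} (h : s ≠ t) :
    (Eam 𝒜 had htc s ∩ Eam 𝒜 had htc t).Finite := by
  rw [Eam, Eam, Set.iUnion₂_inter]
  refine Set.Finite.biUnion (Finset.finite_toSet _) ?_
  intro k _
  rw [Set.inter_iUnion₂]
  refine Set.Finite.biUnion (Finset.finite_toSet _) ?_
  intro k' _
  have hsub : src 𝒜 had htc s k ∩ s.1.getD k ∅ ∩ (src 𝒜 had htc t k' ∩ t.1.getD k' ∅)
      ⊆ src 𝒜 had htc s k ∩ src 𝒜 had htc t k' := by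
    intro x hx; exact ⟨hx.1.1, hx.2.1⟩
  refine Set.Finite.subset ?_ hsub
  exact had.2.2 _ (src_mem 𝒜 had htc s k) _ (src_mem 𝒜 had htc t k')
    (src_inj 𝒜 had htc (Or.inl h))

lemma Eam_trace {s : List (Set ℕ) × β} (hs : Active 𝒜 s.1) :
    ∀ W ∈ s.1, (Eam 𝒜 had htc s ∩ W).Infinite := by
  intro W hW
  obtain ⟨k, hk, hgetW⟩ := List.mem_iff_getElem.mp hW
  have hgd : s.1.getD k ∅ = W := by
    rw [List.getD_eq_getElem?_getD, List.getElem?_eq_getElem hk, Option.getD_some, hgetW]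
  have htr : (ADRestrict 𝒜 (s.1.getD k ∅)).Infinite := by
    rw [hgd]; exact hs.2 W hW
  have hsrc := src_trace 𝒜 had htc s k htr
  rw [hgd] at hsrc
  have hsub : src 𝒜 had htc s k ∩ W ⊆ Eam 𝒜 had htc s ∩ W := by
    intro x hx
    refine ⟨?_, hx.2⟩
    rw [Eam]
    refine Set.mem_biUnion (Finset.mem_range.mpr hk) ?_
    rw [hgd]
    exact hx
  exact Set.Infinite.mono hsub hsrc.2

lemma Eam_infinite {s : List (Set ℕ) × β} (hs : Active 𝒜 s.1) :
    (Eam 𝒜 had htc s).Infinite := by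
  obtain ⟨W, hW⟩ := List.exists_mem_of_ne_nil s.1 hs.1
  exact Set.Infinite.mono (inter_subset_left) (Eam_trace 𝒜 had htc hs W hW)

lemma cd_mem_Fam (n : ℕ) : cd 𝒜 had n ∈ Fam 𝒜 had htc := Or.inl ⟨n, rfl⟩

lemma Eam_mem_Fam {s : List (Set ℕ) × β} (hs : Active 𝒜 s.1) :
    Eam 𝒜 had htc s ∈ Fam 𝒜 had htc := Or.inr ⟨s, hs, rfl⟩

lemma Fam_mem_A {x : Set ℕ} (hx : x ∈ Fam 𝒜 had htc) :
    (x ∈ range (cd 𝒜 had)) ∨ ∃ s : List (Set ℕ) × β, Active 𝒜 s.1 ∧ x = Eam 𝒜 had htc s := hx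

lemma Fam_infinite_mem {x : Set ℕ} (hx : x ∈ Fam 𝒜 had htc) : x.Infinite := by
  rcases hx with ⟨n, rfl⟩ | ⟨s, hs, rfl⟩
  · exact had.2.1 _ (cd_mem 𝒜 had n)
  · exact Eam_infinite 𝒜 had htc hs

lemma Eam_ne_cd {s : List (Set ℕ) × β} (hs : Active 𝒜 s.1) (n : ℕ) :
    Eam 𝒜 had htc s ≠ cd 𝒜 had n := by
  intro hc
  have hfin : (Eam 𝒜 had htc s ∩ cd 𝒜 had n).Finite := by
    refine Eam_inter_finite_of_src_ne 𝒜 had htc (cd_mem 𝒜 had n) s ?_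
    intro k hk
    exact src_not_cd 𝒜 had htc s k ⟨n, hk.symm⟩
  rw [hc, inter_self] at hfin
  exact (had.2.1 _ (cd_mem 𝒜 had n)) hfin

lemma Eam_inj_active {s t : List (Set ℕ) × β} (hs : Active 𝒜 s.1)
    (hst : Eam 𝒜 had htc s = Eam 𝒜 had htc t) : s = t := by
  by_contra hne
  have hfin := Eam_Eam_finite 𝒜 had htc hne
  rw [hst, inter_self] at hfin
  exact (Eam_infinite 𝒜 had htc hs) (by rw [hst]; exact hfin)

lemma Fam_AD : AlmostDisjoint (Fam 𝒜 had htc) := by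
  refine ⟨?_, fun x hx => Fam_infinite_mem 𝒜 had htc hx, ?_⟩
  · apply Set.infinite_of_injective_forall_mem (f := cd 𝒜 had) (cd_inj 𝒜 had)
    intro n
    exact cd_mem_Fam 𝒜 had htc n
  · rintro a ha b hb hab
    rcases ha with ⟨n, rfl⟩ | ⟨s, hs, rfl⟩
    · rcases hb with ⟨m, rfl⟩ | ⟨t, ht, rfl⟩
      · exact had.2.2 _ (cd_mem 𝒜 had n) _ (cd_mem 𝒜 had m) hab
      · rw [inter_comm]
        refine Eam_inter_finite_of_src_ne 𝒜 had htc (cd_mem 𝒜 had n) t ?_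
        intro k hk
        exact src_not_cd 𝒜 had htc t k ⟨n, hk.symm⟩
    · rcases hb with ⟨m, rfl⟩ | ⟨t, ht, rfl⟩
      · refine Eam_inter_finite_of_src_ne 𝒜 had htc (cd_mem 𝒜 had m) s ?_
        intro k hk
        exact src_not_cd 𝒜 had htc s k ⟨m, hk.symm⟩
      · refine Eam_Eam_finite 𝒜 had htc ?_
        intro hc
        exact hab (by rw [hc])

lemma Eam_cross_exists {s : List (Set ℕ) × β} (hs : Active 𝒜 s.1) {B : Set ℕ}
    (hB : (Eam 𝒜 had htc s ∩ B).Infinite) :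
    ∃ k, (src 𝒜 had htc s k ∩ B).Infinite := by
  by_contra hcon
  push_neg at hcon
  apply hB
  have : Eam 𝒜 had htc s ∩ B ⊆ ⋃ k ∈ Finset.range s.1.length, src 𝒜 had htc s k ∩ B := by
    rintro x ⟨hx1, hx2⟩
    rw [Eam] at hx1
    obtain ⟨k, hk, hxk⟩ := Set.mem_iUnion₂.mp hx1
    exact Set.mem_biUnion hk ⟨hxk.1, hx2⟩
  refine Set.Finite.subset ?_ this
  exact Set.Finite.biUnion (Finset.finite_toSet _) (fun k _ => hcon k)

/-- transfer of infinite traces from Fam down to 𝒜 -/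
lemma transfer {B : Set ℕ} (hB : (ADRestrict (Fam 𝒜 had htc) B).Infinite) :
    (ADRestrict 𝒜 B).Infinite := by
  classical
  have hsel : ∀ x : ↥(ADRestrict (Fam 𝒜 had htc) B), ∃ z : Set ℕ,
      z ∈ ADRestrict 𝒜 B ∧ ((x : Set ℕ) ∈ range (cd 𝒜 had) → z = (x : Set ℕ)) ∧
      ((x : Set ℕ) ∉ range (cd 𝒜 had) → z ∉ range (cd 𝒜 had) ∧
        ∃ (s : List (Set ℕ) × β) (k : ℕ), Active 𝒜 s.1 ∧ (x : Set ℕ) = Eam 𝒜 had htc s ∧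
          z = src 𝒜 had htc s k) := by
    rintro ⟨x, hxF, hxB⟩
    by_cases hx : x ∈ range (cd 𝒜 had)
    · refine ⟨x, ?_, fun _ => rfl, fun h => absurd hx h⟩
      obtain ⟨n, rfl⟩ := hx
      exact ⟨cd_mem 𝒜 had n, hxB⟩
    · obtain ⟨s, hs, rfl⟩ := (Fam_mem_A 𝒜 had htc hxF).resolve_left hx
      obtain ⟨k, hk⟩ := Eam_cross_exists 𝒜 had htc hs hxB
      refine ⟨src 𝒜 had htc s k, ⟨src_mem 𝒜 had htc s k, hk⟩, ?_, ?_⟩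
      · intro h; exact absurd h hx
      · intro _
        exact ⟨src_not_cd 𝒜 had htc s k, s, k, hs, rfl, rfl⟩
  choose g hg1 hg2 hg3 using hsel
  haveI : Infinite ↥(ADRestrict (Fam 𝒜 had htc) B) := hB.to_subtype
  apply Set.infinite_of_injective_forall_mem (f := g) ?_ hg1
  intro x y hxy
  by_cases hx : (x : Set ℕ) ∈ range (cd 𝒜 had) <;> by_cases hy : (y : Set ℕ) ∈ range (cd 𝒜 had)
  · apply Subtype.ext
    rw [← hg2 x hx, ← hg2 y hy, hxy]
  · obtain ⟨hy1, s, k, hs, hy2, hy3⟩ := hg3 y hy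
    rw [hg2 x hx, hy3] at hxy
    rw [hxy] at hx
    exact absurd hx (src_not_cd 𝒜 had htc s k)
  · obtain ⟨hx1, s, k, hs, hx2, hx3⟩ := hg3 x hx
    rw [hg2 y hy, hx3] at hxy
    rw [← hxy] at hy
    exact absurd hy (src_not_cd 𝒜 had htc s k)
  · obtain ⟨hx1, s, k, hs, hx2, hx3⟩ := hg3 x hx
    obtain ⟨hy1, t, k', ht, hy2, hy3⟩ := hg3 y hy
    apply Subtype.ext
    rw [hx2, hy2]
    by_cases hst : s = t ∧ k = k'
    · rw [hst.1]
    · exfalso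
      rw [hx3, hy3] at hxy
      refine src_inj 𝒜 had htc ?_ hxy
      by_cases h5 : s = t
      · exact Or.inr (fun hkk => hst ⟨h5, hkk⟩)
      · exact Or.inl h5

omit had htc in
lemma beta_nonempty : Nonempty β := by
  rw [← Cardinal.mk_ne_zero_iff, mk_ord_toType]
  exact continuum_ne_zero

omit had htc in
lemma active_singleton {B : Set ℕ} (hB : (ADRestrict 𝒜 B).Infinite) : Active 𝒜 [B] := by
  refine ⟨by simp, ?_⟩
  intro W hW
  rw [List.mem_singleton] at hW
  rw [hW]
  exact hB

/-- crossing member -/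
lemma crossing {L : List (Set ℕ)} (hL : L ≠ [])
    (h : ∀ W ∈ L, (ADRestrict (Fam 𝒜 had htc) W).Infinite) :
    ∃ e ∈ Fam 𝒜 had htc, ∀ W ∈ L, (e ∩ W).Infinite := by
  obtain ⟨ξ⟩ := beta_nonempty
  have hact : Active 𝒜 L := ⟨hL, fun W hW => transfer 𝒜 had htc (h W hW)⟩
  refine ⟨Eam 𝒜 had htc (L, ξ), Eam_mem_Fam 𝒜 had htc (s := (L, ξ)) hact, ?_⟩
  exact Eam_trace 𝒜 had htc (s := (L, ξ)) hact

/-- pumping: infinite traces of Fam have size continuum -/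
lemma pump {B : Set ℕ} (hB : (ADRestrict (Fam 𝒜 had htc) B).Infinite) :
    #↥(ADRestrict (Fam 𝒜 had htc) B) = continuum := by
  have htrA : (ADRestrict 𝒜 B).Infinite := transfer 𝒜 had htc hB
  have hact : Active 𝒜 [B] := active_singleton 𝒜 htrA
  refine le_antisymm ?_ ?_
  · -- upper bound
    have h1 : Fam 𝒜 had htc ⊆
        range (cd 𝒜 had) ∪ range (fun s : List (Set ℕ) × β => Eam 𝒜 had htc s) := by
      rintro x (hx | ⟨s, _, rfl⟩)
      · exact Or.inl hx
      · exact Or.inr ⟨s, rfl⟩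
    have h2 : #↥(ADRestrict (Fam 𝒜 had htc) B) ≤
        #↥(range (cd 𝒜 had) ∪ range (fun s : List (Set ℕ) × β => Eam 𝒜 had htc s)) :=
      mk_le_mk_of_subset (fun x hx => h1 hx.1)
    refine le_trans h2 (le_trans (mk_union_le _ _) ?_)
    have h3 : #↥(range (cd 𝒜 had)) ≤ ℵ₀ := le_trans mk_range_le (by rw [mk_nat])
    have h4 : #↥(range (fun s : List (Set ℕ) × β => Eam 𝒜 had htc s)) ≤ continuum := by
      refine le_trans mk_range_le ?_
      rw [Cardinal.mk_prod, mk_ord_toType, mk_list_eq_mk, mk_set, mk_nat, two_power_aleph0]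
      simp only [Cardinal.lift_id]
      rw [Cardinal.mul_eq_self aleph0_le_continuum]
    calc #↥(range (cd 𝒜 had)) + #↥(range (fun s : List (Set ℕ) × β => Eam 𝒜 had htc s))
        ≤ ℵ₀ + continuum := add_le_add h3 h4
      _ ≤ continuum + continuum := add_le_add aleph0_le_continuum le_rfl
      _ = continuum := Cardinal.add_eq_self aleph0_le_continuum
  · -- lower bound
    have hinj : Function.Injective
        (fun ξ : β => Eam 𝒜 had htc ([B], ξ)) := by
      intro ξ ξ' hEE
      have := Eam_inj_active 𝒜 had htc (s := ([B], ξ)) (t := ([B], ξ')) hact hEE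
      exact congrArg Prod.snd this
    have hmem : ∀ ξ : β, Eam 𝒜 had htc ([B], ξ) ∈ ADRestrict (Fam 𝒜 had htc) B := by
      intro ξ
      refine ⟨Eam_mem_Fam 𝒜 had htc hact, ?_⟩
      exact Eam_trace 𝒜 had htc (s := ([B], ξ)) hact B (List.mem_singleton.mpr rfl)
    have : #β ≤ #↥(ADRestrict (Fam 𝒜 had htc) B) :=
      Cardinal.mk_le_of_injective (f := fun ξ => (⟨_, hmem ξ⟩ :
        ↥(ADRestrict (Fam 𝒜 had htc) B)))
        (fun ξ ξ' h => hinj (congrArg Subtype.val h))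
    rwa [mk_ord_toType] at this

lemma Fam_TCC : TrueCardContinuum (Fam 𝒜 had htc) := by
  intro B
  by_cases h : (ADRestrict (Fam 𝒜 had htc) B).Finite
  · exact Or.inl h
  · exact Or.inr (pump 𝒜 had htc h)

/-- the two distinguished countable sequences -/
def cseq (n : ℕ) : Set ℕ := cd 𝒜 had (2 * n)
def dseq (n : ℕ) : Set ℕ := cd 𝒜 had (2 * n + 1)

/-- the witness set for non-almost-normality -/
def Wstar : Set ℕ := ⋃ n, (dseq 𝒜 had n \ ⋃ k ∈ Finset.range (n + 1), cseq 𝒜 had k)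

omit htc in
lemma cseq_ne_dseq (n m : ℕ) : cseq 𝒜 had n ≠ dseq 𝒜 had m := by
  intro hc
  have := cd_inj 𝒜 had hc
  omega

omit htc in
lemma cseq_inj : Function.Injective (cseq 𝒜 had) := by
  intro n m h
  have := cd_inj 𝒜 had h
  omega

omit htc in
lemma dseq_inj : Function.Injective (dseq 𝒜 had) := by
  intro n m h
  have := cd_inj 𝒜 had h
  omega

omit htc in
lemma dseq_Wstar (n : ℕ) : (dseq 𝒜 had n ∩ Wstar 𝒜 had).Infinite := by
  have hpiece : (dseq 𝒜 had n \ ⋃ k ∈ Finset.range (n + 1), cseq 𝒜 had k).Infinite := by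
    have heq : dseq 𝒜 had n \ ⋃ k ∈ Finset.range (n + 1), cseq 𝒜 had k
        = dseq 𝒜 had n \ (dseq 𝒜 had n ∩ ⋃ k ∈ Finset.range (n + 1), cseq 𝒜 had k) := by
      rw [Set.diff_self_inter]
    rw [heq]
    refine Set.Infinite.diff ?_ ?_
    · exact had.2.1 _ (cd_mem 𝒜 had _)
    · rw [Set.inter_iUnion₂]
      refine Set.Finite.biUnion (Finset.finite_toSet _) ?_
      intro k _
      exact had.2.2 _ (cd_mem 𝒜 had _) _ (cd_mem 𝒜 had _)
        (fun hc => cseq_ne_dseq 𝒜 had k n hc.symm)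
  refine Set.Infinite.mono ?_ hpiece
  intro x hx
  exact ⟨hx.1, Set.mem_iUnion.mpr ⟨n, hx⟩⟩

omit htc in
lemma cseq_Wstar (k : ℕ) : (cseq 𝒜 had k ∩ Wstar 𝒜 had).Finite := by
  have hsub : cseq 𝒜 had k ∩ Wstar 𝒜 had ⊆
      ⋃ n ∈ Finset.range k, cseq 𝒜 had k ∩ dseq 𝒜 had n := by
    rintro x ⟨hxc, hxW⟩
    obtain ⟨n, hxn⟩ := Set.mem_iUnion.mp hxW
    have hnk : n < k := by
      by_contra hge
      push_neg at hge
      apply hxn.2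
      refine Set.mem_biUnion (Finset.mem_range.mpr ?_) hxc
      omega
    exact Set.mem_biUnion (Finset.mem_range.mpr hnk) ⟨hxc, hxn.1⟩
  refine Set.Finite.subset ?_ hsub
  refine Set.Finite.biUnion (Finset.finite_toSet _) ?_
  intro n _
  exact had.2.2 _ (cd_mem 𝒜 had _) _ (cd_mem 𝒜 had _) (cseq_ne_dseq 𝒜 had k n)

lemma Wstar_trace : (ADRestrict (Fam 𝒜 had htc) (Wstar 𝒜 had)).Infinite := by
  apply Set.infinite_of_injective_forall_mem
    (f := fun n => dseq 𝒜 had n) (fun n m h => dseq_inj 𝒜 had h)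
  intro n
  exact ⟨cd_mem_Fam 𝒜 had htc _, dseq_Wstar 𝒜 had n⟩

end

end Construction

section Topo

variable (𝒢 : Set (Set ℕ))

lemma psi_isOpen_iff (U : Set (Psi 𝒢)) : IsOpen U ↔
    ∀ a : {a : Set ℕ // a ∈ 𝒢}, Psi.pt a ∈ U →
      {n : ℕ | n ∈ a.1 ∧ Psi.nat n ∉ U}.Finite := Iff.rfl

/-- the closure of the trace set: regular closed canonical set -/
def Kc (W : Set ℕ) : Set (Psi 𝒢) :=
  {x | Sum.elim (fun n => n ∈ W) (fun a : {a : Set ℕ // a ∈ 𝒢} => ((a : Set ℕ) ∩ W).Infinite) x}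

lemma mem_Kc_nat {W : Set ℕ} {n : ℕ} : (Psi.nat n : Psi 𝒢) ∈ Kc 𝒢 W ↔ n ∈ W := Iff.rfl

lemma mem_Kc_pt {W : Set ℕ} {a : {a : Set ℕ // a ∈ 𝒢}} :
    (Psi.pt a : Psi 𝒢) ∈ Kc 𝒢 W ↔ ((a : Set ℕ) ∩ W).Infinite := Iff.rfl

/-- open sets described by a set of naturals and a subfamily -/
def Oset (X : Set ℕ) (S : Set (Set ℕ)) : Set (Psi 𝒢) :=
  {x | Sum.elim (fun n => n ∈ X) (fun a : {a : Set ℕ // a ∈ 𝒢} => (a : Set ℕ) ∈ S) x}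

lemma isOpen_Oset {X : Set ℕ} {S : Set (Set ℕ)}
    (h : ∀ a : {a : Set ℕ // a ∈ 𝒢}, (a : Set ℕ) ∈ S → ((a : Set ℕ) \ X).Finite) :
    IsOpen (Oset 𝒢 X S) := by
  rw [psi_isOpen_iff]
  intro a ha
  have : {n : ℕ | n ∈ a.1 ∧ Psi.nat n ∉ Oset 𝒢 X S} = (a : Set ℕ) \ X := rfl
  rw [this]
  exact h a ha

lemma isOpen_PsiNat (W : Set ℕ) : IsOpen (PsiNat 𝒢 W) := by
  rw [psi_isOpen_iff]
  intro a ha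
  exfalso
  obtain ⟨n, _, hn⟩ := ha
  exact Sum.inr_ne_inl hn

lemma isOpen_singleton_nat (n : ℕ) : IsOpen ({Psi.nat n} : Set (Psi 𝒢)) := by
  rw [psi_isOpen_iff]
  intro a ha
  exact absurd ha (fun h => Sum.inr_ne_inl h)

lemma isClosed_Kc (W : Set ℕ) : IsClosed (Kc 𝒢 W) := by
  rw [← isOpen_compl_iff, psi_isOpen_iff]
  intro a ha
  have h2 : ¬ ((a : Set ℕ) ∩ W).Infinite := ha
  rw [Set.not_infinite] at h2
  refine h2.subset ?_
  rintro n ⟨hn, hnK⟩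
  rw [Set.notMem_compl_iff] at hnK
  exact ⟨hn, hnK⟩

lemma mem_PsiNat_nat {W : Set ℕ} {n : ℕ} : (Psi.nat n : Psi 𝒢) ∈ PsiNat 𝒢 W ↔ n ∈ W := by
  constructor
  · rintro ⟨m, hm, hmn⟩
    obtain rfl : m = n := by
      have := Sum.inl.inj hmn.symm
      exact this
    exact hm
  · intro h; exact ⟨n, h, rfl⟩

lemma closure_PsiNat (W : Set ℕ) : closure (PsiNat 𝒢 W) = Kc 𝒢 W := by
  apply le_antisymm
  · apply closure_minimal ?_ (isClosed_Kc 𝒢 W)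
    rintro x ⟨n, hn, rfl⟩
    exact hn
  · intro x hx
    match x with
    | Sum.inl n =>
      apply subset_closure
      exact ⟨n, hx, rfl⟩
    | Sum.inr a =>
      refine mem_closure_iff.mpr ?_
      intro U hU haU
      have hfin := (psi_isOpen_iff 𝒢 U).mp hU a haU
      have hinf : ((a : Set ℕ) ∩ W).Infinite := hx
      obtain ⟨n, hn1, hn2⟩ := ((hinf.diff hfin).nonempty)
      refine ⟨Psi.nat n, ?_, ⟨n, hn1.2, rfl⟩⟩
      by_contra hc
      exact hn2 ⟨hn1.1, hc⟩

lemma regClosed_Kc (W : Set ℕ) : RegClosed (Kc 𝒢 W) := by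
  rw [RegClosed]
  apply le_antisymm
  · calc closure (interior (Kc 𝒢 W)) ⊆ closure (Kc 𝒢 W) := closure_mono interior_subset
      _ = Kc 𝒢 W := (isClosed_Kc 𝒢 W).closure_eq
  · calc Kc 𝒢 W = closure (PsiNat 𝒢 W) := (closure_PsiNat 𝒢 W).symm
      _ ⊆ closure (interior (Kc 𝒢 W)) := by
          apply closure_mono
          apply interior_maximal ?_ (isOpen_PsiNat 𝒢 W)
          rintro x ⟨n, hn, rfl⟩
          exact hn

lemma regClosed_canon (h𝒢 : ∀ a ∈ 𝒢, a.Infinite) {R : Set (Psi 𝒢)} (hR : RegClosed R) :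
    R = Kc 𝒢 {n | Psi.nat n ∈ R} := by
  apply le_antisymm
  · conv_lhs => rw [← hR]
    apply closure_minimal ?_ (isClosed_Kc 𝒢 _)
    intro x hx
    match x with
    | Sum.inl n =>
      have h' : Psi.nat n ∈ R := interior_subset hx
      exact h'
    | Sum.inr a =>
      have hfin := (psi_isOpen_iff 𝒢 _).mp isOpen_interior a hx
      have hsub : (a : Set ℕ) \ {n : ℕ | n ∈ a.1 ∧ Psi.nat n ∉ interior R}
          ⊆ (a : Set ℕ) ∩ {n | Psi.nat n ∈ R} := by
        intro n hn
        refine ⟨hn.1, ?_⟩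
        have h2 : Psi.nat n ∈ interior R := by
          by_contra hc
          exact hn.2 ⟨hn.1, hc⟩
        have h' : Psi.nat n ∈ R := interior_subset h2
        exact h'
      have hainf : ((a : Set ℕ)).Infinite := h𝒢 _ a.2
      exact Set.Infinite.mono hsub (hainf.diff hfin)
  · conv_rhs => rw [← hR]
    calc Kc 𝒢 {n | Psi.nat n ∈ R} = closure (PsiNat 𝒢 {n | Psi.nat n ∈ R}) :=
        (closure_PsiNat 𝒢 _).symm
      _ ⊆ closure (interior R) := by
          apply closure_mono
          rintro x ⟨n, hn, rfl⟩
          rw [mem_interior]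
          exact ⟨{Psi.nat n}, by simpa using hn, isOpen_singleton_nat 𝒢 n, rfl⟩

lemma piClosed_canon (h𝒢 : ∀ a ∈ 𝒢, a.Infinite) {P : Set (Psi 𝒢)} (hP : PiClosed P) :
    ∃ WL : List (Set ℕ), P = {x | ∀ W ∈ WL, x ∈ Kc 𝒢 W} := by
  classical
  obtain ⟨S, hreg, rfl⟩ := hP
  refine ⟨S.toList.map (fun R => {n | Psi.nat n ∈ R}), ?_⟩
  ext x
  simp only [Set.mem_sInter, Finset.mem_coe, Set.mem_setOf_eq, List.mem_map, Finset.mem_toList]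
  constructor
  · rintro hx W ⟨R, hRS, rfl⟩
    have := regClosed_canon 𝒢 h𝒢 (hreg R hRS)
    rw [← this]
    exact hx R hRS
  · intro hx R hRS
    have := regClosed_canon 𝒢 h𝒢 (hreg R hRS)
    rw [this]
    exact hx _ ⟨R, hRS, rfl⟩

/-- the subfamily picked out by a list of trace conditions -/
def GofL (WL : List (Set ℕ)) : Set (Set ℕ) :=
  {a | a ∈ 𝒢 ∧ ∀ W ∈ WL, (a ∩ W).Infinite}

/-- canonical π-closed set -/
def IK (WL : List (Set ℕ)) : Set (Psi 𝒢) := {x | ∀ W ∈ WL, x ∈ Kc 𝒢 W}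

lemma mem_IK_pt {WL : List (Set ℕ)} {a : {a : Set ℕ // a ∈ 𝒢}} :
    (Psi.pt a : Psi 𝒢) ∈ IK 𝒢 WL ↔ ∀ W ∈ WL, ((a : Set ℕ) ∩ W).Infinite := Iff.rfl

lemma mem_IK_nat {WL : List (Set ℕ)} {n : ℕ} :
    (Psi.nat n : Psi 𝒢) ∈ IK 𝒢 WL ↔ ∀ W ∈ WL, n ∈ W := Iff.rfl

lemma sepOpen_symm {X : Type*} [TopologicalSpace X] {A B : Set X} (h : SepOpen A B) :
    SepOpen B A := by
  obtain ⟨U, V, hU, hV, hAU, hBV, hUV⟩ := h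
  exact ⟨V, U, hV, hU, hBV, hAU, hUV.symm⟩

lemma GH_not_both {WL VL : List (Set ℕ)} (hdis : Disjoint (IK 𝒢 WL) (IK 𝒢 VL))
    {a : Set ℕ} (haG : a ∈ GofL 𝒢 WL) (haH : a ∈ GofL 𝒢 VL) : False := by
  have h1 : (Psi.pt ⟨a, haG.1⟩ : Psi 𝒢) ∈ IK 𝒢 WL := haG.2
  have h2 : (Psi.pt ⟨a, haG.1⟩ : Psi 𝒢) ∈ IK 𝒢 VL := haH.2
  exact Set.disjoint_left.mp hdis h1 h2

lemma sep_right_finite (hAD : AlmostDisjoint 𝒢) {WL VL : List (Set ℕ)}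
    (hdis : Disjoint (IK 𝒢 WL) (IK 𝒢 VL)) (hH : (GofL 𝒢 VL).Finite) :
    SepOpen (IK 𝒢 WL) (IK 𝒢 VL) := by
  set Wn : Set ℕ := {n | ∀ W ∈ WL, n ∈ W} with hWn
  set Vn : Set ℕ := {n | ∀ W ∈ VL, n ∈ W} with hVn
  set Y : Set ℕ := (Vn ∪ ⋃₀ (GofL 𝒢 VL)) \ Wn with hY
  refine ⟨Oset 𝒢 Yᶜ (GofL 𝒢 WL), Oset 𝒢 Y (GofL 𝒢 VL), ?_, ?_, ?_, ?_, ?_⟩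
  · -- U open
    apply isOpen_Oset
    intro a haG
    have hsub : (a : Set ℕ) \ Yᶜ ⊆ ((a : Set ℕ) ∩ Vn) ∪ ⋃ b ∈ GofL 𝒢 VL, (a : Set ℕ) ∩ b := by
      intro n hn
      rw [Set.diff_compl] at hn
      have hnY : n ∈ Y := hn.2
      rcases hnY.1 with h1 | h1
      · exact Or.inl ⟨hn.1, h1⟩
      · obtain ⟨b, hb1, hb2⟩ := h1
        exact Or.inr (Set.mem_biUnion hb1 ⟨hn.1, hb2⟩)
    refine Set.Finite.subset ?_ hsub
    refine Set.Finite.union ?_ ?_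
    · by_contra hinf
      refine GH_not_both 𝒢 hdis haG ⟨haG.1, ?_⟩
      intro W hW
      refine Set.Infinite.mono ?_ hinf
      intro n hn
      exact ⟨hn.1, hn.2 W hW⟩
    · refine Set.Finite.biUnion hH ?_
      intro b hb
      have hab : (a : Set ℕ) ≠ b := by
        intro hc
        exact GH_not_both 𝒢 hdis haG (hc ▸ hb)
      exact hAD.2.2 _ haG.1 _ hb.1 hab
  · -- V open
    apply isOpen_Oset
    intro b hbH
    have hsub : (b : Set ℕ) \ Y ⊆ (b : Set ℕ) ∩ Wn := by
      intro n hn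
      have hb1 : n ∈ Vn ∪ ⋃₀ (GofL 𝒢 VL) :=
        Or.inr ⟨(b : Set ℕ), hbH, hn.1⟩
      by_cases hw : n ∈ Wn
      · exact ⟨hn.1, hw⟩
      · exact absurd ⟨hb1, hw⟩ hn.2
    refine Set.Finite.subset ?_ hsub
    by_contra hinf
    refine GH_not_both 𝒢 hdis ⟨hbH.1, ?_⟩ hbH
    intro W hW
    refine Set.Infinite.mono ?_ hinf
    intro n hn
    exact ⟨hn.1, hn.2 W hW⟩
  · -- P ⊆ U
    intro x hx
    match x with
    | Sum.inl n =>
      have hn : ∀ W ∈ WL, n ∈ W := hx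
      have : n ∉ Y := fun hc => hc.2 hn
      exact this
    | Sum.inr a =>
      exact ⟨a.2, hx⟩
  · -- Q ⊆ V
    intro x hx
    match x with
    | Sum.inl n =>
      have hn : ∀ W ∈ VL, n ∈ W := hx
      have hnW : n ∉ Wn := by
        intro hc
        have h1 : (Psi.nat n : Psi 𝒢) ∈ IK 𝒢 WL := hc
        exact Set.disjoint_left.mp hdis h1 hx
      exact ⟨Or.inl hn, hnW⟩
    | Sum.inr a =>
      exact ⟨a.2, hx⟩
  · -- disjoint
    rw [Set.disjoint_left]
    intro x hxU hxV
    match x with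
    | Sum.inl n =>
      have h1 : n ∈ Yᶜ := hxU
      exact h1 hxV
    | Sum.inr a =>
      exact GH_not_both 𝒢 hdis ⟨a.2, hxU.2⟩ ⟨a.2, hxV.2⟩

lemma psi_quasiNormal (hAD : AlmostDisjoint 𝒢)
    (hcross : ∀ L : List (Set ℕ), L ≠ [] → (∀ W ∈ L, (ADRestrict 𝒢 W).Infinite) →
      ∃ e ∈ 𝒢, ∀ W ∈ L, (e ∩ W).Infinite) :
    QuasiNormal (Psi 𝒢) := by
  intro P Q hP hQ hdis
  obtain ⟨WL, rfl⟩ : ∃ WL : List (Set ℕ), P = IK 𝒢 WL := piClosed_canon 𝒢 hAD.2.1 hP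
  obtain ⟨VL, rfl⟩ : ∃ VL : List (Set ℕ), Q = IK 𝒢 VL := piClosed_canon 𝒢 hAD.2.1 hQ
  by_cases hGfin : (GofL 𝒢 WL).Finite
  · exact sepOpen_symm (sep_right_finite 𝒢 hAD hdis.symm hGfin)
  by_cases hHfin : (GofL 𝒢 VL).Finite
  · exact sep_right_finite 𝒢 hAD hdis hHfin
  exfalso
  have hGinf : (GofL 𝒢 WL).Infinite := hGfin
  have hHinf : (GofL 𝒢 VL).Infinite := hHfin
  have hLne : WL ++ VL ≠ [] := by
    intro hc
    rw [List.append_eq_nil_iff] at hc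
    have hPuniv : IK 𝒢 WL = Set.univ := by
      rw [hc.1]
      ext x
      simp [IK]
    have hQuniv : IK 𝒢 VL = Set.univ := by
      rw [hc.2]
      ext x
      simp [IK]
    rw [hPuniv, hQuniv] at hdis
    have : (Psi.nat 0 : Psi 𝒢) ∈ (Set.univ : Set (Psi 𝒢)) := Set.mem_univ _
    exact Set.disjoint_left.mp hdis this this
  have htr : ∀ W ∈ WL ++ VL, (ADRestrict 𝒢 W).Infinite := by
    intro W hW
    rcases List.mem_append.mp hW with h | h
    · refine Set.Infinite.mono ?_ hGinf
      intro a ha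
      exact ⟨ha.1, ha.2 W h⟩
    · refine Set.Infinite.mono ?_ hHinf
      intro a ha
      exact ⟨ha.1, ha.2 W h⟩
  obtain ⟨e, he𝒢, he⟩ := hcross (WL ++ VL) hLne htr
  have h1 : (Psi.pt ⟨e, he𝒢⟩ : Psi 𝒢) ∈ IK 𝒢 WL := by
    intro W hW
    exact he W (List.mem_append.mpr (Or.inl hW))
  have h2 : (Psi.pt ⟨e, he𝒢⟩ : Psi 𝒢) ∈ IK 𝒢 VL := by
    intro W hW
    exact he W (List.mem_append.mpr (Or.inr hW))
  exact Set.disjoint_left.mp hdis h1 h2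

lemma psi_not_almostNormal (hAD : AlmostDisjoint 𝒢)
    (hcross : ∀ L : List (Set ℕ), L ≠ [] → (∀ W ∈ L, (ADRestrict 𝒢 W).Infinite) →
      ∃ e ∈ 𝒢, ∀ W ∈ L, (e ∩ W).Infinite)
    (c : ℕ → Set ℕ) (hcmem : ∀ n, c n ∈ 𝒢) (hcinj : Function.Injective c)
    (Wst : Set ℕ) (hcW : ∀ n, (c n ∩ Wst).Finite)
    (hWtrace : (ADRestrict 𝒢 Wst).Infinite) :
    ¬ AlmostNormal (Psi 𝒢) := by
  intro hAN
  have hCclosed : IsClosed (PsiSub 𝒢 (range c)) := by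
    rw [← isOpen_compl_iff, psi_isOpen_iff]
    intro a _
    refine Set.finite_empty.subset ?_
    rintro n ⟨_, hn2⟩
    rw [Set.notMem_compl_iff] at hn2
    obtain ⟨a', _, ha'⟩ := hn2
    exact Sum.inl_ne_inr ha'
  have hDreg : RegClosed (Kc 𝒢 Wst) := regClosed_Kc 𝒢 Wst
  have hdis : Disjoint (PsiSub 𝒢 (range c)) (Kc 𝒢 Wst) := by
    rw [Set.disjoint_left]
    rintro x ⟨a, ⟨n, hn⟩, rfl⟩ hxD
    have h2 : ((a : Set ℕ) ∩ Wst).Infinite := hxD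
    rw [← hn] at h2
    exact h2 (hcW n)
  obtain ⟨U, V, hU, hV, hCU, hDV, hUV⟩ := hAN _ _ hCclosed hDreg hdis
  set X : Set ℕ := {n | Psi.nat n ∈ U} with hX
  have hcX : ∀ n, (c n ∩ X).Infinite := by
    intro n
    have hptU : (Psi.pt ⟨c n, hcmem n⟩ : Psi 𝒢) ∈ U :=
      hCU ⟨⟨c n, hcmem n⟩, ⟨n, rfl⟩, rfl⟩
    have hfin := (psi_isOpen_iff 𝒢 U).mp hU ⟨c n, hcmem n⟩ hptU
    have hinf : (c n).Infinite := hAD.2.1 _ (hcmem n)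
    refine Set.Infinite.mono ?_ (hinf.diff hfin)
    intro m hm
    refine ⟨hm.1, ?_⟩
    by_contra hc2
    exact hm.2 ⟨hm.1, hc2⟩
  have hXtrace : (ADRestrict 𝒢 X).Infinite := by
    apply Set.infinite_of_injective_forall_mem (f := c) hcinj
    intro n
    exact ⟨hcmem n, hcX n⟩
  have hLne : [X, Wst] ≠ ([] : List (Set ℕ)) := by simp
  have htr : ∀ W ∈ [X, Wst], (ADRestrict 𝒢 W).Infinite := by
    intro W hW
    rcases List.mem_pair.mp hW with rfl | rfl
    · exact hXtrace
    · exact hWtrace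
  obtain ⟨e, he𝒢, he⟩ := hcross [X, Wst] hLne htr
  have heX : (e ∩ X).Infinite := he X (by simp)
  have heW : (e ∩ Wst).Infinite := he Wst (by simp)
  have hptD : (Psi.pt ⟨e, he𝒢⟩ : Psi 𝒢) ∈ Kc 𝒢 Wst := heW
  have hptV : (Psi.pt ⟨e, he𝒢⟩ : Psi 𝒢) ∈ V := hDV hptD
  have hfin := (psi_isOpen_iff 𝒢 V).mp hV ⟨e, he𝒢⟩ hptV
  apply heX
  refine Set.Finite.subset hfin ?_
  rintro n ⟨hn1, hn2⟩
  refine ⟨hn1, ?_⟩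
  intro hnV
  exact Set.disjoint_left.mp hUV hn2 hnV

end Topo

/-- if there exists an almost disjoint family of true cardinality 𝔠, then there
is an almost disjoint family ℱ of true cardinality 𝔠 with Ψ(ℱ) quasi-normal but not
almost-normal. -/
theorem exists_quasiNormal_not_almostNormal
    (h : ∃ 𝒜, AlmostDisjoint 𝒜 ∧ TrueCardContinuum 𝒜) :
    ∃ ℱ, AlmostDisjoint ℱ ∧ TrueCardContinuum ℱ ∧
      QuasiNormal (Psi ℱ) ∧ ¬ AlmostNormal (Psi ℱ) := by
  obtain ⟨𝒜, had, htc⟩ := h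
  have hAD := Construction.Fam_AD 𝒜 had htc
  have hcross : ∀ L : List (Set ℕ), L ≠ [] →
      (∀ W ∈ L, (ADRestrict (Construction.Fam 𝒜 had htc) W).Infinite) →
      ∃ e ∈ Construction.Fam 𝒜 had htc, ∀ W ∈ L, (e ∩ W).Infinite := by
    intro L hL hWs
    exact Construction.crossing 𝒜 had htc hL hWs
  refine ⟨Construction.Fam 𝒜 had htc, hAD, Construction.Fam_TCC 𝒜 had htc, ?_, ?_⟩
  · exact psi_quasiNormal _ hAD hcross
  · refine psi_not_almostNormal _ hAD hcross (Construction.cseq 𝒜 had)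
      (fun n => Construction.cd_mem_Fam 𝒜 had htc (2 * n)) (Construction.cseq_inj 𝒜 had)
      (Construction.Wstar 𝒜 had) (Construction.cseq_Wstar 𝒜 had)
      (Construction.Wstar_trace 𝒜 had htc)

end PsiSpace
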